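/- Suppose Algorithm 1 is run on an on-line P_9-free bipartite graph G. Let v be a vertex with color index k and let i satisfy k ≥ 2i ≥ 2. If S_i(v) is complete in G, then the set S_i(v) contains an induced copy of X_i in G whose root is v. -/

import Mathlib

/-! ### P_n-free graphs -/

/-- `f` lists the vertices of an induced path on `n` vertices in `G`. -/
def IsInducedPath {V : Type*} (G : SimpleGraph V) (n : ℕ) (f : Fin n → V) : Prop :=
  Function.Injective f ∧
    ∀ a b : Fin n, G.Adj (f a) (f b) ↔ (a.val + 1 = b.val ∨ b.val + 1 = a.val)

/-- `G` contains no induced path on `n` vertices. -/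
def PFree {V : Type*} (G : SimpleGraph V) (n : ℕ) : Prop :=
  ¬ ∃ f : Fin n → V, IsInducedPath G n f

/-! ### The graphs `X_k` -/

/-- Vertex set of the graph `X_k` (with a junk value at `k = 0`). -/
def XV : ℕ → Type
  | 0 => PUnit
  | 1 => PUnit
  | 2 => Bool
  | (n+3) => Option (XV (n+2) ⊕ XV (n+2))

/-- The root of `X_k`. -/
def XRoot : (k : ℕ) → XV k
  | 0 => PUnit.unit
  | 1 => PUnit.unit
  | 2 => true
  | (_+3) => none

/-- The side of a vertex of `X_k`: `true` is the root side, `false` the non-root side. -/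
def XSide : (k : ℕ) → XV k → Bool
  | 0, _ => true
  | 1, _ => true
  | 2, v => v
  | (_+3), none => true
  | (n+3), some (Sum.inl x) => !(XSide (n+2) x)
  | (n+3), some (Sum.inr x) => XSide (n+2) x

/-- Base adjacency relation of `X_k`:  for `k ≥ 3`, `X_k` consists of two disjoint copies of
`X_{k-1}` with no edges in between, together with a root vertex joined to the root side of the
first copy and to the non-root side of the second copy. -/
def XRel : (k : ℕ) → XV k → XV k → Prop
  | 0, _, _ => False
  | 1, _, _ => False
  | 2, u, v => u ≠ v
  | (n+3), none, some (Sum.inl x) => XSide (n+2) x = true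
  | (n+3), none, some (Sum.inr x) => XSide (n+2) x = false
  | (n+3), some (Sum.inl x), none => XSide (n+2) x = true
  | (n+3), some (Sum.inr x), none => XSide (n+2) x = false
  | (n+3), some (Sum.inl x), some (Sum.inl y) => XRel (n+2) x y
  | (n+3), some (Sum.inr x), some (Sum.inr y) => XRel (n+2) x y
  | (_+3), _, _ => False

/-- The graph `X_k`. -/
def XGraph (k : ℕ) : SimpleGraph (XV k) := SimpleGraph.fromRel (XRel k)

/-! ### Algorithm 1 -/

/-- The three palettes of colors `a_i`, `b_i`, `c_i` used by Algorithm 1. -/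
inductive PalColor : Type
  | a : ℕ → PalColor
  | b : ℕ → PalColor
  | c : ℕ → PalColor
  deriving DecidableEq

/-- The index of a color. -/
def PalColor.index : PalColor → ℕ
  | a i => i
  | b i => i
  | c i => i

/-- A vertex `u` has color index `j` when its color is `a_j` or `b_j`. -/
def hasColorIndex (col : ℕ → PalColor) (u j : ℕ) : Prop :=
  col u = PalColor.a j ∨ col u = PalColor.b j

/-- Vertex set of `G_i[u]` at time `t` (vertices are presented in the order `0, 1, 2, …`):
the vertices presented before time `t` whose color has index between `1` and `i`,
together with `u`. -/
def domSet (col : ℕ → PalColor) (t i u : ℕ) : Set ℕ :=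
  {w | (w < t ∧ 1 ≤ (col w).index ∧ (col w).index ≤ i) ∨ w = u}

/-- `x` and `y` are connected within the subgraph of `G` induced on `S`. -/
def ReachIn (G : SimpleGraph ℕ) (S : Set ℕ) (x y : ℕ) : Prop :=
  ∃ (hx : x ∈ S) (hy : y ∈ S), (G.induce S).Reachable ⟨x, hx⟩ ⟨y, hy⟩

/-- `x` and `y` are joined by a walk of even length within the subgraph of `G` induced on `S`;
in a bipartite graph this says exactly that `x` and `y` are on the same side of their
(common) connected component. -/
def EvenReachIn (G : SimpleGraph ℕ) (S : Set ℕ) (x y : ℕ) : Prop :=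
  ∃ (hx : x ∈ S) (hy : y ∈ S) (p : (G.induce S).Walk ⟨x, hx⟩ ⟨y, hy⟩), Even p.length

/-- `C_i[u]` at time `t`: the connected component of `u` in the subgraph induced on
`domSet col t i u`. -/
def comp (G : SimpleGraph ℕ) (col : ℕ → PalColor) (t i u : ℕ) : Set ℕ :=
  {w | ReachIn G (domSet col t i u) u w}

/-- `C_i^y(u)` at time `t`: the connected component of `y` in `C_i(u) = C_i[u] \ {u}`. -/
def compMinus (G : SimpleGraph ℕ) (col : ℕ → PalColor) (t i u y : ℕ) : Set ℕ :=
  {w | ReachIn G (domSet col t i u \ {u}) y w}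

/-- Color `a_i` is mixed in `C_i[t]` at time `t`: vertices on both sides of `C_i[t]`
have color `a_i`. -/
def MixedA (G : SimpleGraph ℕ) (col : ℕ → PalColor) (t i : ℕ) : Prop :=
  ∃ x ∈ comp G col t i t, ∃ y ∈ comp G col t i t,
    col x = PalColor.a i ∧ col y = PalColor.a i ∧
    ¬ EvenReachIn G (domSet col t i t) x y

/-- `m = max {i ≥ 1 | a_i is mixed in C_i[t]} + 1` (with `max ∅ = 0`). -/
noncomputable def mIdx (G : SimpleGraph ℕ) (col : ℕ → PalColor) (t : ℕ) : ℕ :=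
  sSup {i | 1 ≤ i ∧ MixedA G col t i} + 1

/-- `u'` is universal to `C_{j-1}[u]` (at time `t`): `u'` is adjacent to all vertices in one of
the two sides of `C_{j-1}[u]`. -/
def UnivTo (G : SimpleGraph ℕ) (col : ℕ → PalColor) (t j u u' : ℕ) : Prop :=
  (∀ x ∈ comp G col t (j-1) u, EvenReachIn G (domSet col t (j-1) u) u x → G.Adj u' x) ∨
  (∀ x ∈ comp G col t (j-1) u, ¬ EvenReachIn G (domSet col t (j-1) u) u x → G.Adj u' x)

open Classical in
/-- One step of Algorithm 1: the color given to the vertex presented at time `t`, assuming that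
`col` records the colors of the previously presented vertices `0, …, t-1`. -/
noncomputable def step (G : SimpleGraph ℕ) (col : ℕ → PalColor) (t : ℕ) : PalColor :=
  let m := mIdx G col t
  let S := domSet col t m t
  let C := comp G col t m t
  let I1 : Set ℕ := {x ∈ C | EvenReachIn G S t x}
  let I2 : Set ℕ := {x ∈ C | ¬ EvenReachIn G S t x}
  if ∃ u ∈ I2, col u = PalColor.a m then PalColor.b m
  else if ∃ u ∈ I2, col u = PalColor.c m then PalColor.a m
  else if ∃ u ∈ I1 ∪ I2, ∃ u' ∈ I2, ∃ j : ℕ, hasColorIndex col u j ∧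
      ((m : ℝ) - Real.sqrt (2 * m) + 2 ≤ (j : ℝ)) ∧ UnivTo G col t j u u'
    then PalColor.c m
  else PalColor.a m

/-- The colors of the first `k` presented vertices under Algorithm 1 (junk elsewhere). -/
noncomputable def algoColAux (G : SimpleGraph ℕ) : ℕ → ℕ → PalColor
  | 0 => fun _ => PalColor.a 0
  | (k+1) => fun w => if w = k then step G (algoColAux G k) k else algoColAux G k w

/-- `algoCol G v` is the color that Algorithm 1 assigns to vertex `v` when the on-line graph `G`
is presented in the vertex order `0, 1, 2, …`. -/
noncomputable def algoCol (G : SimpleGraph ℕ) (v : ℕ) : PalColor :=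
  algoColAux G (v + 1) v

/-- The on-line graph on `ℕ` obtained by presenting the vertices of `G` in the order given by
the enumeration `π` (vertices `≥ n` are isolated). -/
def toNatGraph {V : Type*} (G : SimpleGraph V) {n : ℕ} (π : Fin n ≃ V) : SimpleGraph ℕ :=
  SimpleGraph.fromRel (fun i j => ∃ (hi : i < n) (hj : j < n), G.Adj (π ⟨i, hi⟩) (π ⟨j, hj⟩))

/-! ### Children, grandchildren and the sets `S_i(v)` -/

/-- There is no induced path on 5 vertices of `G` inside `S` with `v` as an endpoint. -/
def NoP5From (G : SimpleGraph ℕ) (S : Set ℕ) (v : ℕ) : Prop :=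
  ¬ ∃ f : Fin 5 → ℕ, (∀ l, f l ∈ S) ∧ IsInducedPath G 5 f ∧ (f 0 = v ∨ f 4 = v)

/-- `c` is a child of `v` (where `k` is the color index of `v`): `c` is an earliest presented
vertex of its side of `C_{k-1}(v)` colored `a_{k-1}`. -/
def IsChild (G : SimpleGraph ℕ) (side : ℕ → Bool) (v k c : ℕ) : Prop :=
  c ∈ comp G (algoCol G) v (k-1) v ∧ c ≠ v ∧ algoCol G c = PalColor.a (k-1) ∧
  ∀ c', c' ∈ comp G (algoCol G) v (k-1) v → algoCol G c' = PalColor.a (k-1) →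
    side c' = side c → c ≤ c'

/-- `(g1, g2)` is a valid pair of grandchildren for `v` (of color index `k ≥ 3`): they are the
children of a child `v'` of `v` for which the component `C_{k-1}^{v'}[v]` contains no induced
path on 5 vertices with endpoint `v`. -/
def IsGrandchildPair (G : SimpleGraph ℕ) (side : ℕ → Bool) (v k g1 g2 : ℕ) : Prop :=
  ∃ v', IsChild G side v k v' ∧
    NoP5From G (insert v (compMinus G (algoCol G) v (k-1) v v')) v ∧
    IsChild G side v' (k-1) g1 ∧ IsChild G side v' (k-1) g2 ∧ side g1 ≠ side g2

/-- `gc` is a valid choice of grandchildren: for each vertex `v` with color index `k ≥ 3` it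
fixes a valid pair of grandchildren of `v`. -/
def ValidGC (G : SimpleGraph ℕ) (side : ℕ → Bool) (gc : ℕ → ℕ × ℕ) : Prop :=
  ∀ v k, hasColorIndex (algoCol G) v k → 3 ≤ k →
    IsGrandchildPair G side v k (gc v).1 (gc v).2

/-- `Reaches gc i v w` is the relation `v →_i w`: there is a sequence `v = x_1, …, x_j = w`
with `j ≤ i` in which each `x_{ℓ+1}` is a grandchild of `x_ℓ`. -/
def Reaches (gc : ℕ → ℕ × ℕ) : ℕ → ℕ → ℕ → Prop
  | 0, _, _ => False
  | 1, v, w => v = w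
  | (i+2), v, w => Reaches gc (i+1) v w ∨
      ∃ u, Reaches gc (i+1) v u ∧ (w = (gc u).1 ∨ w = (gc u).2)

/-- `S_i(v) = {w | v →_i w}`. -/
def Sset (gc : ℕ → ℕ × ℕ) (i v : ℕ) : Set ℕ := {w | Reaches gc i v w}

/-- `S_i(v)` is complete in `G`: any `u, w ∈ S_i(v)` with `u →_i w` lying on opposite sides
of `G` are adjacent. -/
def SComplete (G : SimpleGraph ℕ) (side : ℕ → Bool) (gc : ℕ → ℕ × ℕ) (i v : ℕ) : Prop :=
  ∀ u w, u ∈ Sset gc i v → w ∈ Sset gc i v → Reaches gc i u w → side u ≠ side w → G.Adj u w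

/-! ### Auxiliary lemmas -/

open SimpleGraph

section Reach

variable {G : SimpleGraph ℕ} {S T : Set ℕ}

lemma ReachIn.mem_left {x y : ℕ} (h : ReachIn G S x y) : x ∈ S := by
  obtain ⟨hx, -, -⟩ := h; exact hx

lemma ReachIn.mem_right {x y : ℕ} (h : ReachIn G S x y) : y ∈ S := by
  obtain ⟨-, hy, -⟩ := h; exact hy

lemma ReachIn.refl {x : ℕ} (hx : x ∈ S) : ReachIn G S x x := ⟨hx, hx, .refl _⟩

lemma ReachIn.symm {x y : ℕ} (h : ReachIn G S x y) : ReachIn G S y x := by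
  obtain ⟨hx, hy, r⟩ := h; exact ⟨hy, hx, r.symm⟩

lemma ReachIn.trans {x y z : ℕ} (h : ReachIn G S x y) (h' : ReachIn G S y z) :
    ReachIn G S x z := by
  obtain ⟨hx, hy, r⟩ := h; obtain ⟨hy', hz, r'⟩ := h'; exact ⟨hx, hz, r.trans r'⟩

lemma ReachIn.mono (hST : S ⊆ T) {x y : ℕ} (h : ReachIn G S x y) : ReachIn G T x y := by
  obtain ⟨hx, hy, r⟩ := h
  exact ⟨hST hx, hST hy, r.map (⟨Set.inclusion hST, fun {a b} hab => hab⟩ : G.induce S →g G.induce T)⟩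

lemma ReachIn.of_adj {x y : ℕ} (hx : x ∈ S) (hy : y ∈ S) (h : G.Adj x y) : ReachIn G S x y :=
  ⟨hx, hy, (show (G.induce S).Adj ⟨x, hx⟩ ⟨y, hy⟩ from h).reachable⟩

lemma reach_support :
    ∀ {a b : ↥S} (p : (G.induce S).Walk a b), (∀ y ∈ p.support, (y : ℕ) ∈ T) →
      ∃ (ha : (a : ℕ) ∈ T) (hb : (b : ℕ) ∈ T), (G.induce T).Reachable ⟨a, ha⟩ ⟨b, hb⟩ := by
  intro a b p
  induction p with
  | nil =>
    intro h
    have := h _ (SimpleGraph.Walk.start_mem_support _)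
    exact ⟨this, this, .refl _⟩
  | @cons u v' w h q ih =>
    intro hsup
    have hu : (u : ℕ) ∈ T := hsup _ (SimpleGraph.Walk.start_mem_support _)
    obtain ⟨hv, hw, r⟩ := ih (fun y hy => hsup y
      (by rw [SimpleGraph.Walk.support_cons]; exact List.mem_cons_of_mem _ hy))
    exact ⟨hu, hw, (SimpleGraph.Adj.reachable
      (show (G.induce T).Adj ⟨u, hu⟩ ⟨v', hv⟩ from h)).trans r⟩

lemma walk_side {side : ℕ → Bool} (hside : ∀ x y, G.Adj x y → side x ≠ side y) :
    ∀ {a b : ↥S} (p : (G.induce S).Walk a b),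
      ((side (a : ℕ) = side (b : ℕ)) ↔ Even p.length) := by
  intro a b p
  induction p with
  | nil => simp
  | @cons u v' w h q ih =>
    have hac : side (u : ℕ) ≠ side (v' : ℕ) := hside _ _ h
    rw [SimpleGraph.Walk.length_cons, Nat.even_add_one, ← ih]
    revert hac
    generalize side (u : ℕ) = p1
    generalize side (v' : ℕ) = p2
    generalize side (w : ℕ) = p3
    revert p1 p2 p3; decide

lemma evenReach_side {side : ℕ → Bool} (hside : ∀ x y, G.Adj x y → side x ≠ side y)
    {x y : ℕ} (h : EvenReachIn G S x y) : side x = side y := by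
  obtain ⟨hx, hy, p, hp⟩ := h
  exact (walk_side hside p).mpr hp

end Reach
section Color

variable {G : SimpleGraph ℕ}

lemma algoColAux_junk (G : SimpleGraph ℕ) : ∀ (t w : ℕ), t ≤ w → algoColAux G t w = PalColor.a 0 := by
  intro t
  induction t with
  | zero => intro w _; rfl
  | succ t ih =>
    intro w hw
    have : w ≠ t := by omega
    simp only [algoColAux, this, if_false]
    exact ih w (by omega)

lemma algoCol_eq_step (G : SimpleGraph ℕ) (x : ℕ) : algoCol G x = step G (algoColAux G x) x := by
  simp [algoCol, algoColAux]

lemma algoColAux_stable (G : SimpleGraph ℕ) : ∀ (t w : ℕ), w < t → algoColAux G t w = algoCol G w := by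
  intro t
  induction t with
  | zero => intro w hw; omega
  | succ t ih =>
    intro w hw
    by_cases h : w = t
    · subst h
      simp only [algoColAux, if_pos rfl]
      exact (algoCol_eq_step G w).symm
    · simp only [algoColAux, h, if_false]
      exact ih w (by omega)

lemma step_index (G : SimpleGraph ℕ) (col : ℕ → PalColor) (t : ℕ) :
    (step G col t).index = mIdx G col t := by
  unfold step
  simp only []
  split_ifs <;> rfl

lemma mIdx_ge (G : SimpleGraph ℕ) (t J : ℕ) (hJ : 1 ≤ J) (hm : MixedA G (algoColAux G t) t J) :
    J + 1 ≤ mIdx G (algoColAux G t) t := by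
  have hbdd : BddAbove {i | 1 ≤ i ∧ MixedA G (algoColAux G t) t i} := by
    refine ⟨(Finset.range t).sup fun w => (algoColAux G t w).index, ?_⟩
    rintro i ⟨hi1, x, hxmem, y, hymem, hcx, hcy, hne⟩
    obtain ⟨-, hxdom, -⟩ := hxmem
    rcases hxdom with ⟨hxt, -, -⟩ | rfl
    · have hidx : (algoColAux G t x).index = i := by rw [hcx]; rfl
      calc i = (algoColAux G t x).index := hidx.symm
        _ ≤ _ := Finset.le_sup (f := fun w => (algoColAux G t w).index) (Finset.mem_range.2 hxt)
    · exfalso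
      rw [algoColAux_junk G x x le_rfl] at hcx
      have : (0 : ℕ) = i := by
        have := congrArg PalColor.index hcx
        simpa [PalColor.index] using this
      omega
  exact Nat.succ_le_succ (le_csSup hbdd ⟨hJ, hm⟩)

end Color
section Comp

variable {G : SimpleGraph ℕ}

lemma comp_subset_domSet {col : ℕ → PalColor} {t i u : ℕ} :
    comp G col t i u ⊆ domSet col t i u := fun _ hw => hw.mem_right

lemma mem_comp_self {col : ℕ → PalColor} {t i u : ℕ} : u ∈ comp G col t i u :=
  ReachIn.refl (Or.inr rfl)

lemma comp_mono (col : ℕ → PalColor) {u z I J : ℕ} (hz : z ∈ comp G col u I u) (hJ : J ≤ I) :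
    comp G col z J z ⊆ comp G col u I u := by
  have hzdom : z ∈ domSet col u I u := hz.mem_right
  have hzu : z ≤ u := by
    rcases hzdom with ⟨h, -⟩ | h
    · omega
    · omega
  have hsub : domSet col z J z ⊆ domSet col u I u := by
    rintro w (⟨hw1, hw2, hw3⟩ | rfl)
    · exact Or.inl ⟨by omega, hw2, le_trans hw3 hJ⟩
    · exact hzdom
  intro w hw
  exact hz.trans (hw.mono hsub)

end Comp

section ReachesLemmas

variable {gc : ℕ → ℕ × ℕ}

lemma reaches_succ : ∀ {j u w : ℕ}, Reaches gc j u w → Reaches gc (j + 1) u w := by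
  intro j u w h
  match j with
  | 0 => exact h.elim
  | 1 => exact Or.inl h
  | (j + 2) => exact Or.inl h

lemma reaches_self : ∀ {j v : ℕ}, 1 ≤ j → Reaches gc j v v := by
  intro j
  induction j with
  | zero => intro h; omega
  | succ j ih =>
    intro _ v
    rcases Nat.eq_zero_or_pos j with rfl | hj
    · exact rfl
    · exact reaches_succ (ih hj)

lemma reaches_prefix : ∀ (j : ℕ) {v g w : ℕ}, (g = (gc v).1 ∨ g = (gc v).2) →
    Reaches gc j g w → Reaches gc (j + 1) v w := by
  intro j
  induction j with
  | zero => intro v g w _ h; exact h.elim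
  | succ j ih =>
    intro v g w hg h
    rcases Nat.eq_zero_or_pos j with rfl | hj
    · have h' : g = w := h
      subst h'
      exact Or.inr ⟨v, rfl, hg⟩
    · obtain ⟨j', rfl⟩ : ∃ j', j = j' + 1 := ⟨j - 1, by omega⟩
      rcases (h : Reaches gc (j' + 2) g w) with h | ⟨z, hz, hw⟩
      · exact reaches_succ (ih hg h)
      · exact Or.inr ⟨z, ih hg hz, hw⟩

end ReachesLemmas

section XLemmas

@[simp] lemma XRel_none_none (n : ℕ) : XRel (n+3) none none = False := rfl
@[simp] lemma XRel_none_inl (n : ℕ) (x : XV (n+2)) :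
    XRel (n+3) none (some (Sum.inl x)) = (XSide (n+2) x = true) := rfl
@[simp] lemma XRel_none_inr (n : ℕ) (x : XV (n+2)) :
    XRel (n+3) none (some (Sum.inr x)) = (XSide (n+2) x = false) := rfl
@[simp] lemma XRel_inl_none (n : ℕ) (x : XV (n+2)) :
    XRel (n+3) (some (Sum.inl x)) none = (XSide (n+2) x = true) := rfl
@[simp] lemma XRel_inr_none (n : ℕ) (x : XV (n+2)) :
    XRel (n+3) (some (Sum.inr x)) none = (XSide (n+2) x = false) := rfl
@[simp] lemma XRel_inl_inl (n : ℕ) (x y : XV (n+2)) :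
    XRel (n+3) (some (Sum.inl x)) (some (Sum.inl y)) = XRel (n+2) x y := rfl
@[simp] lemma XRel_inr_inr (n : ℕ) (x y : XV (n+2)) :
    XRel (n+3) (some (Sum.inr x)) (some (Sum.inr y)) = XRel (n+2) x y := rfl
@[simp] lemma XRel_inl_inr (n : ℕ) (x y : XV (n+2)) :
    XRel (n+3) (some (Sum.inl x)) (some (Sum.inr y)) = False := rfl
@[simp] lemma XRel_inr_inl (n : ℕ) (x y : XV (n+2)) :
    XRel (n+3) (some (Sum.inr x)) (some (Sum.inl y)) = False := rfl
@[simp] lemma XSide_none (n : ℕ) : XSide (n+3) none = true := rfl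
@[simp] lemma XSide_inl (n : ℕ) (x : XV (n+2)) :
    XSide (n+3) (some (Sum.inl x)) = !(XSide (n+2) x) := rfl
@[simp] lemma XSide_inr (n : ℕ) (x : XV (n+2)) :
    XSide (n+3) (some (Sum.inr x)) = XSide (n+2) x := rfl

end XLemmas

lemma exists_max_mem {α : Type*} (f : α → ℕ) : ∀ (l : List α), l ≠ [] →
    ∃ a ∈ l, ∀ b ∈ l, f b ≤ f a := by
  intro l
  induction l with
  | nil => simp
  | cons x xs ih =>
    intro _
    rcases eq_or_ne xs [] with rfl | hne
    · exact ⟨x, by simp, by simp⟩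
    · obtain ⟨a, ha, hmax⟩ := ih hne
      rcases le_total (f a) (f x) with h | h
      · refine ⟨x, by simp, ?_⟩
        intro b hb
        rcases List.mem_cons.1 hb with rfl | hb
        · exact le_rfl
        · exact (hmax b hb).trans h
      · refine ⟨a, List.mem_cons_of_mem _ ha, ?_⟩
        intro b hb
        rcases List.mem_cons.1 hb with rfl | hb
        · exact h
        · exact hmax b hb
section DC

variable {G : SimpleGraph ℕ} {side : ℕ → Bool}

/-- Endpoint case of the distinct-components lemma: the maximum of the walk is `g1` itself. -/
lemma lemDC_end (hside : ∀ x y, G.Adj x y → side x ≠ side y)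
    (J : ℕ) (D : Set ℕ)
    (hD : ∀ w ∈ D, 1 ≤ (algoCol G w).index ∧ (algoCol G w).index ≤ J)
    (g1 g2 : ℕ) (hc1 : algoCol G g1 = PalColor.a J) (hc2 : algoCol G g2 = PalColor.a J)
    (hs : side g1 ≠ side g2) (h1 : g1 ∈ D) (h2 : g2 ∈ D)
    (p : (G.induce D).Walk ⟨g1, h1⟩ ⟨g2, h2⟩)
    (hmax : ∀ y ∈ p.support, (y : ℕ) ≤ g1) : False := by
  have hg2lt : g2 < g1 := by
    have hle : g2 ≤ g1 := hmax _ p.end_mem_support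
    have hne : g2 ≠ g1 := fun h => hs (by rw [h])
    omega
  have hstep : step G (algoColAux G g1) g1 = PalColor.a J := (algoCol_eq_step G g1).symm.trans hc1
  have hsup : ∀ y ∈ p.support, (y : ℕ) ∈ domSet (algoColAux G g1) g1 J g1 := by
    intro y hy
    rcases eq_or_lt_of_le (hmax y hy) with heq | hlt
    · exact Or.inr heq
    · refine Or.inl ⟨hlt, ?_, ?_⟩ <;> rw [algoColAux_stable G g1 _ hlt]
      · exact (hD _ y.2).1
      · exact (hD _ y.2).2
  obtain ⟨ha, hb, r⟩ := reach_support p hsup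
  have m2 : g2 ∈ comp G (algoColAux G g1) g1 J g1 := ⟨Or.inr rfl, hb, r⟩
  have c2 : algoColAux G g1 g2 = PalColor.a J := by
    rw [algoColAux_stable G g1 g2 hg2lt]; exact hc2
  have notEven : ¬ EvenReachIn G (domSet (algoColAux G g1) g1 J g1) g1 g2 := by
    intro h
    exact hs (evenReach_side hside h)
  unfold step at hstep
  simp only [] at hstep
  split_ifs at hstep with hb1 hb2 hb3 <;>
  · have hm : mIdx G (algoColAux G g1) g1 = J := by
      have := congrArg PalColor.index hstep
      simpa [PalColor.index] using this
    rw [hm] at hb1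
    exact hb1 ⟨g2, ⟨m2, notEven⟩, c2⟩

/-- The distinct-components lemma: two vertices both colored `a J`, lying on opposite
sides, cannot be connected inside a set of vertices of color index at most `J`. -/
lemma lemDC (hside : ∀ x y, G.Adj x y → side x ≠ side y)
    (J : ℕ) (hJ : 1 ≤ J) (D : Set ℕ)
    (hD : ∀ w ∈ D, 1 ≤ (algoCol G w).index ∧ (algoCol G w).index ≤ J)
    (g1 g2 : ℕ) (hc1 : algoCol G g1 = PalColor.a J) (hc2 : algoCol G g2 = PalColor.a J)
    (hs : side g1 ≠ side g2) : ¬ ReachIn G D g1 g2 := by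
  rintro ⟨h1, h2, r⟩
  obtain ⟨p⟩ := r
  obtain ⟨xs, hxsmem, hxsmax⟩ := exists_max_mem (fun y : ↥D => (y : ℕ)) p.support p.support_ne_nil
  by_cases hx1 : (xs : ℕ) = g1
  · exact lemDC_end hside J D hD g1 g2 hc1 hc2 hs h1 h2 p
      (fun y hy => (hxsmax y hy).trans_eq hx1)
  by_cases hx2 : (xs : ℕ) = g2
  · refine lemDC_end hside J D hD g2 g1 hc2 hc1 hs.symm h2 h1 p.reverse ?_
    intro y hy
    rw [SimpleGraph.Walk.support_reverse, List.mem_reverse] at hy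
    exact (hxsmax y hy).trans_eq hx2
  · -- the maximum is an interior vertex: mixed-color contradiction
    have hg1lt : g1 < (xs : ℕ) := by
      have := hxsmax _ p.start_mem_support
      simp only [] at this
      omega
    have hg2lt : g2 < (xs : ℕ) := by
      have := hxsmax _ p.end_mem_support
      simp only [] at this
      omega
    set x := (xs : ℕ) with hxdef
    have hsup : ∀ y ∈ p.support, (y : ℕ) ∈ domSet (algoColAux G x) x J x := by
      intro y hy
      rcases eq_or_lt_of_le (hxsmax y hy) with heq | hlt
      · exact Or.inr heq
      · refine Or.inl ⟨hlt, ?_, ?_⟩ <;> rw [algoColAux_stable G x _ hlt]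
        · exact (hD _ y.2).1
        · exact (hD _ y.2).2
    obtain ⟨ha1, hb1', r1⟩ := reach_support (p.takeUntil xs hxsmem)
      (fun y hy => hsup y (p.support_takeUntil_subset hxsmem hy))
    obtain ⟨ha2, hb2', r2⟩ := reach_support (p.dropUntil xs hxsmem)
      (fun y hy => hsup y (p.support_dropUntil_subset hxsmem hy))
    have m1 : g1 ∈ comp G (algoColAux G x) x J x := ⟨Or.inr rfl, ha1, r1.symm⟩
    have m2 : g2 ∈ comp G (algoColAux G x) x J x := ⟨Or.inr rfl, hb2', r2⟩
    have c1 : algoColAux G x g1 = PalColor.a J := by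
      rw [algoColAux_stable G x g1 hg1lt]; exact hc1
    have c2 : algoColAux G x g2 = PalColor.a J := by
      rw [algoColAux_stable G x g2 hg2lt]; exact hc2
    have notEven : ¬ EvenReachIn G (domSet (algoColAux G x) x J x) g1 g2 := by
      intro h
      exact hs (evenReach_side hside h)
    have hmix : MixedA G (algoColAux G x) x J := ⟨g1, m1, g2, m2, c1, c2, notEven⟩
    have hge := mIdx_ge G x J hJ hmix
    have hidx : (algoCol G x).index = mIdx G (algoColAux G x) x := by
      rw [algoCol_eq_step]; exact step_index G _ x
    have hle := (hD x xs.2).2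
    omega
section LemA

variable {G : SimpleGraph ℕ} {side : ℕ → Bool} {gc : ℕ → ℕ × ℕ}

/-- Every vertex reached from `u` by grandchild chains of length at most `d` lies in
`C_{K-1}[u]`, and its color is `a_{K - 2d'}` for the appropriate depth `d'`. -/
lemma lemA (hgc : ValidGC G side gc) :
    ∀ (d u K w : ℕ), hasColorIndex (algoCol G) u K → 2 * d + 1 ≤ K →
      Reaches gc (d + 1) u w →
      w ∈ comp G (algoCol G) u (K - 1) u ∧
        (w = u ∨ ∃ d', 1 ≤ d' ∧ d' ≤ d ∧ algoCol G w = PalColor.a (K - 2 * d')) := by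
  intro d
  induction d with
  | zero =>
    intro u K w _ _ hr
    have h : u = w := hr
    subst h
    exact ⟨mem_comp_self, Or.inl rfl⟩
  | succ d ih =>
    intro u K w hu hK hr
    rcases (hr : Reaches gc (d + 2) u w) with hr | ⟨z, hz, hw⟩
    · obtain ⟨h1, h2⟩ := ih u K w hu (by omega) hr
      refine ⟨h1, ?_⟩
      rcases h2 with h2 | ⟨d', hd1, hd2, hcol⟩
      · exact Or.inl h2
      · exact Or.inr ⟨d', hd1, by omega, hcol⟩
    · obtain ⟨hzcomp, hzcol⟩ := ih u K z hu (by omega) hz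
      have hKz : ∃ d0, d0 ≤ d ∧ hasColorIndex (algoCol G) z (K - 2 * d0) := by
        rcases hzcol with rfl | ⟨d', hd1, hd2, hcol⟩
        · exact ⟨0, by omega, by simpa using hu⟩
        · exact ⟨d', by omega, Or.inl hcol⟩
      obtain ⟨d0, hd0, hzK⟩ := hKz
      have h3 : 3 ≤ K - 2 * d0 := by omega
      obtain ⟨v', hch, -, hg1, hg2, -⟩ := hgc z (K - 2 * d0) hzK h3
      have hw' : IsChild G side v' (K - 2 * d0 - 1) w := by
        rcases hw with rfl | rfl
        · exact hg1
        · exact hg2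
      obtain ⟨hv'comp, hv'ne, hv'col, -⟩ := hch
      obtain ⟨hwcomp, hwne, hwcol, -⟩ := hw'
      have m1 : comp G (algoCol G) v' (K - 2 * d0 - 1 - 1) v' ⊆
          comp G (algoCol G) z (K - 2 * d0 - 1) z := comp_mono _ hv'comp (by omega)
      have m2 : comp G (algoCol G) z (K - 2 * d0 - 1) z ⊆
          comp G (algoCol G) u (K - 1) u := comp_mono _ hzcomp (by omega)
      refine ⟨m2 (m1 hwcomp), Or.inr ⟨d0 + 1, by omega, by omega, ?_⟩⟩
      have he : K - 2 * d0 - 1 - 1 = K - 2 * (d0 + 1) := by omega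
      rw [← he]
      exact hwcol

end LemA
section XAdj

@[simp] lemma XRel_two (u w : Bool) : XRel 2 u w = (u ≠ w) := rfl
@[simp] lemma XSide_two (b : Bool) : XSide 2 b = b := rfl

lemma XGraph_adj_two (u w : Bool) : (XGraph 2).Adj u w ↔ u ≠ w := by
  rw [XGraph]; refine (SimpleGraph.fromRel_adj ..).trans ?_
  constructor
  · exact fun h => h.1
  · exact fun h => ⟨h, Or.inl h⟩

lemma XGraph_adj_none_inl (n : ℕ) (y : XV (n + 2)) :
    (XGraph (n + 3)).Adj none (some (Sum.inl y)) ↔ XSide (n + 2) y = true := by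
  rw [XGraph]; refine (SimpleGraph.fromRel_adj ..).trans ?_
  simp; exact fun _ h => Option.some_ne_none _ h.symm

lemma XGraph_adj_none_inr (n : ℕ) (y : XV (n + 2)) :
    (XGraph (n + 3)).Adj none (some (Sum.inr y)) ↔ XSide (n + 2) y = false := by
  rw [XGraph]; refine (SimpleGraph.fromRel_adj ..).trans ?_
  simp; exact fun _ h => Option.some_ne_none _ h.symm

lemma XGraph_adj_inl_inl (n : ℕ) (y z : XV (n + 2)) :
    (XGraph (n + 3)).Adj (some (Sum.inl y)) (some (Sum.inl z)) ↔ (XGraph (n + 2)).Adj y z := by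
  rw [XGraph, XGraph, SimpleGraph.fromRel_adj]; refine (SimpleGraph.fromRel_adj ..).trans ?_
  simp only [XRel_inl_inl]
  constructor
  · rintro ⟨hne, hr⟩
    refine ⟨?_, hr⟩
    intro he
    exact hne (by rw [he])
  · rintro ⟨hne, hr⟩
    refine ⟨?_, hr⟩
    intro he
    apply hne
    have he' : (some (Sum.inl y) : Option (XV (n+2) ⊕ XV (n+2))) = some (Sum.inl z) := he
    injection he' with h1
    exact Sum.inl.inj h1

lemma XGraph_adj_inr_inr (n : ℕ) (y z : XV (n + 2)) :
    (XGraph (n + 3)).Adj (some (Sum.inr y)) (some (Sum.inr z)) ↔ (XGraph (n + 2)).Adj y z := by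
  rw [XGraph, XGraph, SimpleGraph.fromRel_adj]; refine (SimpleGraph.fromRel_adj ..).trans ?_
  simp only [XRel_inr_inr]
  constructor
  · rintro ⟨hne, hr⟩
    refine ⟨?_, hr⟩
    intro he
    exact hne (by rw [he])
  · rintro ⟨hne, hr⟩
    refine ⟨?_, hr⟩
    intro he
    apply hne
    have he' : (some (Sum.inr y) : Option (XV (n+2) ⊕ XV (n+2))) = some (Sum.inr z) := he
    injection he' with h1
    exact Sum.inr.inj h1

lemma XGraph_not_adj_inl_inr (n : ℕ) (y z : XV (n + 2)) :
    ¬ (XGraph (n + 3)).Adj (some (Sum.inl y)) (some (Sum.inr z)) := by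
  rw [XGraph]; refine fun h => ?_; have h' := (SimpleGraph.fromRel_adj ..).mp h
  exact h'.2.elim id id

end XAdj
lemma bool1 : ∀ p q r : Bool, q ≠ r → p ≠ r → p = q := by decide
lemma bool2 : ∀ p q r : Bool, p ≠ q → q ≠ r → p = r := by decide

lemma mainX (G : SimpleGraph ℕ) (side : ℕ → Bool)
    (hside : ∀ x y, G.Adj x y → side x ≠ side y)
    (gc : ℕ → ℕ × ℕ) (hgc : ValidGC G side gc) :
    ∀ i, 1 ≤ i → ∀ v k, hasColorIndex (algoCol G) v k → 2 * i ≤ k →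
      SComplete G side gc i v →
      ∃ e : XGraph i ↪g G, (∀ x, e x ∈ Sset gc i v) ∧ e (XRoot i) = v ∧
        (∀ x, (side (e x) = side v ↔ XSide i x = true)) := by
  intro i
  induction i using Nat.strong_induction_on with
  | _ i ih =>
  rcases i with _ | _ | _ | n
  · intro h; omega
  · -- i = 1
    intro _ v k hvk hk hcomp
    refine ⟨⟨⟨fun _ => v, fun a b _ => Subsingleton.elim (α := PUnit) a b⟩,
      fun {a b} => ?_⟩, fun x => ?_, rfl, fun x => ?_⟩
    · refine iff_of_false (G.loopless.irrefl v) ?_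
      intro hadj
      exact hadj.ne (Subsingleton.elim (α := PUnit) a b)
    · exact (rfl : v = v)
    · have hx : XSide 1 x = true := rfl
      exact iff_of_true rfl hx
  · -- i = 2
    intro _ v k hvk hk hcomp
    obtain ⟨v', hch, -, hg1, hg2, hss⟩ := hgc v k hvk (by omega)
    obtain ⟨gA, hgAor, hsA⟩ : ∃ gA, (gA = (gc v).1 ∨ gA = (gc v).2) ∧ side gA ≠ side v := by
      by_cases h : side (gc v).1 = side v
      · exact ⟨(gc v).2, Or.inr rfl, fun hh => hss (h.trans hh.symm)⟩
      · exact ⟨(gc v).1, Or.inl rfl, h⟩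
    have hreach : Reaches gc 2 v gA := Or.inr ⟨v, rfl, hgAor⟩
    have hvS : v ∈ Sset gc 2 v := reaches_self (by omega)
    have hadj : G.Adj v gA := hcomp v gA hvS hreach hreach (Ne.symm hsA)
    have hne : v ≠ gA := fun h => hsA (by rw [← h])
    refine ⟨⟨⟨fun b : Bool => bif b then v else gA, ?_⟩, fun {a b} => ?_⟩, fun x => ?_, rfl,
      fun x => ?_⟩
    · intro a b h
      match a, b with
      | true, true => rfl
      | false, false => rfl
      | true, false => exact absurd h hne
      | false, true => exact absurd h.symm hne
    · match a, b with
      | true, true => exact iff_of_false (G.loopless.irrefl v) (by simp [XGraph_adj_two])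
      | true, false => exact iff_of_true hadj (by simp [XGraph_adj_two])
      | false, true => exact iff_of_true hadj.symm (by simp [XGraph_adj_two])
      | false, false => exact iff_of_false (G.loopless.irrefl gA) (by simp [XGraph_adj_two])
    · match x with
      | true => exact hvS
      | false => exact hreach
    · match x with
      | true => exact iff_of_true rfl rfl
      | false => exact iff_of_false hsA (by simp)
  · -- i = n + 3
    intro _ v k hvk hk hcomp
    obtain ⟨v', hch, -, hg1, hg2, hss⟩ := hgc v k hvk (by omega)
    obtain ⟨gA, gB, hgAor, hgBor, hchA, hchB, hsA, hsB, hsAB⟩ :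
        ∃ gA gB, (gA = (gc v).1 ∨ gA = (gc v).2) ∧ (gB = (gc v).1 ∨ gB = (gc v).2) ∧
          IsChild G side v' (k - 1) gA ∧ IsChild G side v' (k - 1) gB ∧
          side gA ≠ side v ∧ side gB = side v ∧ side gA ≠ side gB := by
      by_cases h : side (gc v).1 = side v
      · exact ⟨(gc v).2, (gc v).1, Or.inr rfl, Or.inl rfl, hg2, hg1,
          fun hh => hss (h.trans hh.symm), h, Ne.symm hss⟩
      · refine ⟨(gc v).1, (gc v).2, Or.inl rfl, Or.inr rfl, hg1, hg2, h, ?_, hss⟩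
        revert hss h
        generalize side (gc v).1 = p1
        generalize side (gc v).2 = p2
        generalize side v = p3
        revert p1 p2 p3; decide
    obtain ⟨hgAcomp, hgAne, hgAcol, -⟩ := hchA
    obtain ⟨hgBcomp, hgBne, hgBcol, -⟩ := hchB
    have hk2 : k - 1 - 1 = k - 2 := by omega
    rw [hk2] at hgAcomp hgAcol hgBcomp hgBcol
    have hAidx : hasColorIndex (algoCol G) gA (k - 2) := Or.inl hgAcol
    have hBidx : hasColorIndex (algoCol G) gB (k - 2) := Or.inl hgBcol
    have hsubS : ∀ g, (g = (gc v).1 ∨ g = (gc v).2) → SComplete G side gc (n + 2) g := by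
      intro g hgor u w hu hw hr hsw
      exact hcomp u w (reaches_prefix _ hgor hu) (reaches_prefix _ hgor hw) (reaches_succ hr) hsw
    obtain ⟨eA, hmemA, hrootA, hinvA⟩ :=
      ih (n + 2) (by omega) (by omega) gA (k - 2) hAidx (by omega) (hsubS gA hgAor)
    obtain ⟨eB, hmemB, hrootB, hinvB⟩ :=
      ih (n + 2) (by omega) (by omega) gB (k - 2) hBidx (by omega) (hsubS gB hgBor)
    obtain ⟨hv'comp, hv'ne, hv'col, -⟩ := hch
    have hv'lt : v' < v := by
      rcases ReachIn.mem_right hv'comp with ⟨h, -⟩ | h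
      · omega
      · exact absurd h hv'ne
    set D : Set ℕ := domSet (algoCol G) v' (k - 2) v' \ {v'} with hDdef
    have hreachD : ∀ g, g ∈ comp G (algoCol G) v' (k - 2) v' → g ≠ v' →
        algoCol G g = PalColor.a (k - 2) →
        ∀ w, Reaches gc (n + 2) g w → ReachIn G D g w := by
      intro g hgcomp hgne hgcol w hw
      have hglt : g < v' := by
        rcases ReachIn.mem_right hgcomp with ⟨h, -⟩ | h
        · omega
        · exact absurd h hgne
      have h1 := (lemA hgc (n + 1) g (k - 2) w (Or.inl hgcol) (by omega) hw).1
      have hsub : domSet (algoCol G) g (k - 2 - 1) g ⊆ D := by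
        rintro w' (⟨hw1, hw2, hw3⟩ | rfl)
        · exact ⟨Or.inl ⟨by omega, hw2, by omega⟩, by simp only [Set.mem_singleton_iff]; omega⟩
        · exact ⟨ReachIn.mem_right hgcomp, by simp only [Set.mem_singleton_iff]; exact hgne⟩
      exact ReachIn.mono hsub h1
    have hDbound : ∀ w ∈ D, 1 ≤ (algoCol G w).index ∧ (algoCol G w).index ≤ k - 2 := by
      rintro w ⟨hw1, hw2⟩
      rcases hw1 with ⟨-, h2, h3⟩ | rfl
      · exact ⟨h2, h3⟩
      · exact (hw2 rfl).elim
    have hDC : ¬ ReachIn G D gA gB :=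
      lemDC hside (k - 2) (by omega) D hDbound gA gB hgAcol hgBcol hsAB
    have hreachA : ∀ y, ReachIn G D gA (eA y) :=
      fun y => hreachD gA hgAcomp hgAne hgAcol _ (hmemA y)
    have hreachB : ∀ z, ReachIn G D gB (eB z) :=
      fun z => hreachD gB hgBcomp hgBne hgBcol _ (hmemB z)
    have hcrossNe : ∀ y z, eA y ≠ eB z := by
      intro y z h
      exact hDC ((hreachA y).trans (by rw [h]; exact (hreachB z).symm))
    have hcrossAdj : ∀ y z, ¬ G.Adj (eA y) (eB z) := by
      intro y z h
      exact hDC ((hreachA y).trans ((ReachIn.of_adj (ReachIn.mem_right (hreachA y))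
        (ReachIn.mem_right (hreachB z)) h).trans (hreachB z).symm))
    have hltv : ∀ w, w ∈ D → w < v := by
      rintro w ⟨hw1, hw2⟩
      rcases hw1 with ⟨h1, -⟩ | rfl
      · omega
      · exact (hw2 rfl).elim
    have hltA : ∀ y, eA y < v := fun y => hltv _ (ReachIn.mem_right (hreachA y))
    have hltB : ∀ z, eB z < v := fun z => hltv _ (ReachIn.mem_right (hreachB z))
    have hvS : v ∈ Sset gc (n + 3) v := reaches_self (by omega)
    have hmemA' : ∀ y, Reaches gc (n + 3) v (eA y) :=
      fun y => reaches_prefix _ hgAor (hmemA y)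
    have hmemB' : ∀ z, Reaches gc (n + 3) v (eB z) :=
      fun z => reaches_prefix _ hgBor (hmemB z)
    have hvA : ∀ y, G.Adj v (eA y) ↔ XSide (n + 2) y = true := by
      intro y
      constructor
      · intro h
        exact (hinvA y).1 (bool1 _ _ _ hsA (Ne.symm (hside _ _ h)))
      · intro h
        have hy := (hinvA y).2 h
        refine hcomp v (eA y) hvS (hmemA' y) (hmemA' y) ?_
        rw [hy]; exact Ne.symm hsA
    have hvB : ∀ z, G.Adj v (eB z) ↔ XSide (n + 2) z = false := by
      intro z
      constructor
      · intro h
        have h2 : side (eB z) ≠ side gB := by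
          rw [hsB]; exact Ne.symm (hside _ _ h)
        have hx : XSide (n + 2) z ≠ true := fun hh => h2 ((hinvB z).2 hh)
        simpa using hx
      · intro h
        have hne' : XSide (n + 2) z ≠ true := by simp [h]
        have h2 : side (eB z) ≠ side gB := fun hh => hne' ((hinvB z).1 hh)
        refine hcomp v (eB z) hvS (hmemB' z) (hmemB' z) ?_
        rw [← hsB]; exact Ne.symm h2
    refine ⟨⟨⟨fun x : Option (XV (n + 2) ⊕ XV (n + 2)) =>
        Option.elim x v (Sum.elim (fun y => eA y) (fun z => eB z)), ?_⟩,
      fun {a b} => ?_⟩, fun x => ?_, rfl, fun x => ?_⟩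
    · -- injectivity
      rintro (_ | (y | y)) (_ | (z | z)) h
      · rfl
      · exact absurd h.symm (hltA z).ne
      · exact absurd h.symm (hltB z).ne
      · exact absurd h (hltA y).ne
      · rw [eA.injective h]
      · exact absurd h (hcrossNe y z)
      · exact absurd h (hltB y).ne
      · exact absurd h.symm (hcrossNe z y)
      · rw [eB.injective h]
    · -- map_rel_iff
      match a, b with
      | none, none => exact iff_of_false (G.loopless.irrefl v) ((XGraph _).loopless.irrefl _)
      | none, some (Sum.inl y) =>
        rw [XGraph_adj_none_inl]
        exact hvA y
      | some (Sum.inl y), none =>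
        rw [show ((XGraph (n+3)).Adj (some (Sum.inl y)) none ↔
          (XGraph (n+3)).Adj none (some (Sum.inl y))) from (XGraph (n+3)).adj_comm _ _,
          XGraph_adj_none_inl, G.adj_comm]
        exact hvA y
      | none, some (Sum.inr z) =>
        rw [XGraph_adj_none_inr]
        exact hvB z
      | some (Sum.inr z), none =>
        rw [show ((XGraph (n+3)).Adj (some (Sum.inr z)) none ↔
          (XGraph (n+3)).Adj none (some (Sum.inr z))) from (XGraph (n+3)).adj_comm _ _,
          XGraph_adj_none_inr, G.adj_comm]
        exact hvB z
      | some (Sum.inl y), some (Sum.inl z) =>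
        rw [XGraph_adj_inl_inl]
        exact eA.map_rel_iff
      | some (Sum.inr y), some (Sum.inr z) =>
        rw [XGraph_adj_inr_inr]
        exact eB.map_rel_iff
      | some (Sum.inl y), some (Sum.inr z) =>
        exact iff_of_false (hcrossAdj y z) (XGraph_not_adj_inl_inr n y z)
      | some (Sum.inr y), some (Sum.inl z) =>
        exact iff_of_false (fun h => hcrossAdj z y h.symm)
          (fun h => XGraph_not_adj_inl_inr n z y h.symm)
    · -- membership
      match x with
      | none => exact hvS
      | some (Sum.inl y) => exact hmemA' y
      | some (Sum.inr z) => exact hmemB' z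
    · -- sides
      match x with
      | none => exact iff_of_true rfl rfl
      | some (Sum.inl y) =>
        show side (eA y) = side v ↔ _
        rw [XSide_inl]
        constructor
        · intro h
          have h2 : side (eA y) ≠ side gA := by rw [h]; exact Ne.symm hsA
          have hx : XSide (n + 2) y ≠ true := fun hh => h2 ((hinvA y).2 hh)
          simpa using hx
        · intro h
          have hx : XSide (n + 2) y ≠ true := by simpa using h
          have h2 : side (eA y) ≠ side gA := fun hh => hx ((hinvA y).1 hh)
          exact bool2 _ _ _ h2 (by simpa using hsA)
      | some (Sum.inr z) =>
        show side (eB z) = side v ↔ _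
        rw [XSide_inr, ← hsB]
        exact hinvB z

theorem stmt8 (G : SimpleGraph ℕ) (n : ℕ) (hfin : ∀ i j, G.Adj i j → i < n ∧ j < n)
    (hP9 : PFree G 9)
    (side : ℕ → Bool) (hside : ∀ x y, G.Adj x y → side x ≠ side y)
    (gc : ℕ → ℕ × ℕ) (hgc : ValidGC G side gc)
    (v k i : ℕ) (hvk : hasColorIndex (algoCol G) v k)
    (h1 : 2 ≤ 2 * i) (h2 : 2 * i ≤ k)
    (hcomp : SComplete G side gc i v) :
    ∃ e : XGraph i ↪g G, (∀ x, e x ∈ Sset gc i v) ∧ e (XRoot i) = v := by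
  obtain ⟨e, hm, hr, -⟩ := mainX G side hside gc hgc i (by omega) v k hvk h2 hcomp
  exact ⟨e, hm, hr⟩
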